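/- arXiv:2002.04534 — 4 statements merged into one kernel-verified Lean document; each statement's English description precedes it below -/
import Mathlib

section
/- The polynomial φ₀ = 3 + μ₁² + μ₂² + μ₃² + (1/√3)μ₁μ₂μ₃ satisfies the toric nearly Kähler equation: det Hess φ₀ = (8/3)φ₀ − (11/3)∂_r φ₀ + ∂_r² φ₀ holds as an identity of polynomials. -/
open MvPolynomial

/-- The determinant of the Hessian matrix of second partial derivatives of a
polynomial in three variables. -/
noncomputable def hessDet (φ : MvPolynomial (Fin 3) ℝ) : MvPolynomial (Fin 3) ℝ :=
  (Matrix.of fun i j : Fin 3 => pderiv i (pderiv j φ)).det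

/-- The Euler operator `∂_r φ = μ₁ ∂φ/∂μ₁ + μ₂ ∂φ/∂μ₂ + μ₃ ∂φ/∂μ₃`. -/
noncomputable def eulerOp (φ : MvPolynomial (Fin 3) ℝ) : MvPolynomial (Fin 3) ℝ :=
  ∑ i : Fin 3, X i * pderiv i φ

/-- The toric nearly Kähler equation `det Hess φ = (8/3)φ − (11/3)∂_r φ + ∂_r² φ`. -/
def IsTNKSolution (φ : MvPolynomial (Fin 3) ℝ) : Prop :=
  hessDet φ = C (8/3) * φ - C (11/3) * eulerOp φ + eulerOp (eulerOp φ)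

/-- The model cubic solution `φ₀ = 3 + μ₁² + μ₂² + μ₃² + (1/√3) μ₁μ₂μ₃`. -/
noncomputable def φ₀ : MvPolynomial (Fin 3) ℝ :=
  C 3 + X 0 ^ 2 + X 1 ^ 2 + X 2 ^ 2 + C (1 / Real.sqrt 3) * (X 0 * X 1 * X 2)

/-- The polynomial `φ₀` satisfies the toric nearly Kähler equation as a polynomial identity. -/
theorem phi0_is_TNK_solution : IsTNKSolution φ₀ := by
  set c : MvPolynomial (Fin 3) ℝ := C (1 / Real.sqrt 3) with hcdef
  set d : MvPolynomial (Fin 3) ℝ := C (1/3 : ℝ) with hddef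
  have hc : c ^ 3 = d * c := by
    rw [hcdef, hddef, ← map_pow, ← map_mul]
    congr 1
    have h3 : Real.sqrt 3 ^ 3 = 3 * Real.sqrt 3 := by
      rw [pow_succ, Real.sq_sqrt (by norm_num : (0:ℝ) ≤ 3)]
    rw [div_pow, one_pow, h3]; ring
  have hc2 : c ^ 2 = d := by
    rw [hcdef, hddef, ← map_pow]; congr 1
    rw [div_pow, one_pow, Real.sq_sqrt (by norm_num : (0:ℝ) ≤ 3)]
  have hd : (3 : MvPolynomial (Fin 3) ℝ) * d = 1 := by
    rw [hddef, ← map_ofNat (C : ℝ →+* MvPolynomial (Fin 3) ℝ) 3, ← map_mul]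
    norm_num
  have pdnum : ∀ (i : Fin 3) (n : ℝ), pderiv i (C n : MvPolynomial (Fin 3) ℝ) = 0 :=
    fun i n => pderiv_C
  have pd2 : ∀ i : Fin 3, pderiv i (2 : MvPolynomial (Fin 3) ℝ) = 0 := fun i => by
    rw [← map_ofNat (C : ℝ →+* MvPolynomial (Fin 3) ℝ) 2]; exact pderiv_C
  have pd3 : ∀ i : Fin 3, pderiv i (3 : MvPolynomial (Fin 3) ℝ) = 0 := fun i => by
    rw [← map_ofNat (C : ℝ →+* MvPolynomial (Fin 3) ℝ) 3]; exact pderiv_C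
  have hp0 : pderiv 0 φ₀ = 2 * X 0 + c * (X 1 * X 2) := by
    unfold φ₀; simp [pderiv_mul, pderiv_X, pderiv_C, Pi.single_apply, sq, hcdef]; ring
  have hp1 : pderiv 1 φ₀ = 2 * X 1 + c * (X 0 * X 2) := by
    unfold φ₀; simp [pderiv_mul, pderiv_X, pderiv_C, Pi.single_apply, sq, hcdef]; ring
  have hp2 : pderiv 2 φ₀ = 2 * X 2 + c * (X 0 * X 1) := by
    unfold φ₀; simp [pderiv_mul, pderiv_X, pderiv_C, Pi.single_apply, sq, hcdef]; ring
  have heuler : eulerOp φ₀ = 2 * (X 0 ^ 2 + X 1 ^ 2 + X 2 ^ 2)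
      + 3 * (c * (X 0 * X 1 * X 2)) := by
    unfold eulerOp
    rw [Fin.sum_univ_three, hp0, hp1, hp2]; ring
  have heuler2 : eulerOp (eulerOp φ₀) = 4 * (X 0 ^ 2 + X 1 ^ 2 + X 2 ^ 2)
      + 9 * (c * (X 0 * X 1 * X 2)) := by
    unfold eulerOp
    rw [Fin.sum_univ_three]
    rw [show (pderiv 0 (∑ i : Fin 3, X i * pderiv i φ₀)) = 4 * X 0 + 3 * (c * (X 1 * X 2)) by
      rw [show (∑ i : Fin 3, X i * pderiv i φ₀) = eulerOp φ₀ from rfl, heuler]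
      simp [pderiv_mul, pderiv_X, Pi.single_apply, sq, hcdef, pd2, pd3, pderiv_C]; ring]
    rw [show (pderiv 1 (∑ i : Fin 3, X i * pderiv i φ₀)) = 4 * X 1 + 3 * (c * (X 0 * X 2)) by
      rw [show (∑ i : Fin 3, X i * pderiv i φ₀) = eulerOp φ₀ from rfl, heuler]
      simp [pderiv_mul, pderiv_X, Pi.single_apply, sq, hcdef, pd2, pd3, pderiv_C]; ring]
    rw [show (pderiv 2 (∑ i : Fin 3, X i * pderiv i φ₀)) = 4 * X 2 + 3 * (c * (X 0 * X 1)) by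
      rw [show (∑ i : Fin 3, X i * pderiv i φ₀) = eulerOp φ₀ from rfl, heuler]
      simp [pderiv_mul, pderiv_X, Pi.single_apply, sq, hcdef, pd2, pd3, pderiv_C]; ring]
    ring
  have hhess : hessDet φ₀ = 8 + 2 * c^3 * (X 0 * X 1 * X 2)
      - 2 * c^2 * (X 0^2 + X 1^2 + X 2^2) := by
    unfold hessDet
    rw [Matrix.det_fin_three]
    simp only [Matrix.of_apply]
    rw [hp0, hp1, hp2]
    simp [pderiv_mul, pderiv_X, Pi.single_apply, hcdef, pd2, pd3, pderiv_C]
    ring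
  have hC83 : (C (8/3 : ℝ) : MvPolynomial (Fin 3) ℝ) = 8 * d := by
    rw [hddef, ← map_ofNat (C : ℝ →+* MvPolynomial (Fin 3) ℝ) 8, ← map_mul]; norm_num
  have hC113 : (C (11/3 : ℝ) : MvPolynomial (Fin 3) ℝ) = 11 * d := by
    rw [hddef, ← map_ofNat (C : ℝ →+* MvPolynomial (Fin 3) ℝ) 11, ← map_mul]; norm_num
  have hC3 : (C (3 : ℝ) : MvPolynomial (Fin 3) ℝ) = 3 := map_ofNat _ 3
  rw [IsTNKSolution, hhess, heuler2, heuler, hc, hc2, hC83, hC113]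
  rw [show φ₀ = C 3 + X 0 ^ 2 + X 1 ^ 2 + X 2 ^ 2 + c * (X 0 * X 1 * X 2) from rfl, hC3]
  linear_combination (-8 + 4*(X 0^2 + X 1^2 + X 2^2) + 9*c*(X 0*X 1*X 2)) * hd
end

section
/- Let φ ∈ ℝ[μ₁,μ₂,μ₃] be a polynomial of degree d ≥ 4 satisfying the toric nearly Kähler equation, and let φ^d denote its top-degree homogeneous component. Then det Hess φ^d = 0 identically. -/
open MvPolynomial

private abbrev P3 := MvPolynomial (Fin 3) ℝ

private lemma degree_sub_single_add (m : Fin 3 →₀ ℕ) (i : Fin 3) (h : m i ≠ 0) :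
    ((m - Finsupp.single i 1).sum fun _ n => n) + 1 = m.sum fun _ n => n := by
  have h1 : (m - Finsupp.single i 1) + Finsupp.single i 1 = m := by
    ext j
    by_cases hj : j = i
    · subst hj
      simp only [Finsupp.add_apply, Finsupp.tsub_apply, Finsupp.single_eq_same]
      omega
    · simp [Finsupp.single_eq_of_ne' (Ne.symm hj), Finsupp.tsub_apply]
  conv_rhs => rw [← h1]
  rw [Finsupp.sum_add_index' (fun _ => rfl) (fun _ _ _ => rfl),
    Finsupp.sum_single_index rfl]

private lemma totalDegree_pderiv_le (i : Fin 3) (p : P3) {n : ℕ}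
    (h : p.totalDegree ≤ n + 1) : ((pderiv i p : P3)).totalDegree ≤ n := by
  rw [show (pderiv i p : P3) = ∑ m ∈ p.support, pderiv i (monomial m (coeff m p)) by
    rw [← map_sum, ← as_sum]]
  refine (totalDegree_finset_sum _ _).trans (Finset.sup_le fun m hm => ?_)
  rw [pderiv_monomial]
  by_cases hmi : m i = 0
  · simp [hmi]
  · refine (totalDegree_monomial_le _ _).trans ?_
    show ((m - Finsupp.single i 1).sum fun _ n => n) ≤ n
    have h1 := degree_sub_single_add m i hmi
    have h2 : (m.sum fun _ n => n) ≤ n + 1 := le_trans (le_totalDegree hm) h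
    omega

private lemma isHomogeneous_pderiv {i : Fin 3} {p : P3} {n : ℕ}
    (h : p.IsHomogeneous (n + 1)) : ((pderiv i p : P3)).IsHomogeneous n := by
  rw [show (pderiv i p : P3) = ∑ m ∈ p.support, pderiv i (monomial m (coeff m p)) by
    rw [← map_sum, ← as_sum]]
  apply IsHomogeneous.sum
  intro m hm
  rw [pderiv_monomial]
  by_cases hmi : m i = 0
  · simpa [hmi] using isHomogeneous_zero (Fin 3) ℝ n
  · apply isHomogeneous_monomial
    have hdm : m.degree = n + 1 := by
      have := h (mem_support_iff.mp hm)
      rwa [Pi.one_def, ← Finsupp.degree_eq_weight_one] at this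
    have h1 := degree_sub_single_add m i hmi
    have h2 : (m - Finsupp.single i 1).degree = (m - Finsupp.single i 1).sum fun _ n => n := rfl
    have h3 : m.degree = m.sum fun _ n => n := rfl
    omega

private lemma totalDegree_det3_le (M : Matrix (Fin 3) (Fin 3) P3) (δ : Fin 3 → ℕ)
    (h : ∀ i j, (M i j).totalDegree ≤ δ i) :
    M.det.totalDegree ≤ δ 0 + δ 1 + δ 2 := by
  have H : ∀ i j k : Fin 3, (M 0 i * M 1 j * M 2 k).totalDegree ≤ δ 0 + δ 1 + δ 2 :=
    fun i j k => (totalDegree_mul _ _).trans (add_le_add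
      ((totalDegree_mul _ _).trans (add_le_add (h 0 i) (h 1 j))) (h 2 k))
  have sub_le : ∀ p q : P3, ∀ n : ℕ, p.totalDegree ≤ n → q.totalDegree ≤ n →
      (p - q).totalDegree ≤ n := fun p q n hp hq =>
    (totalDegree_sub _ _).trans (max_le hp hq)
  have add_le' : ∀ p q : P3, ∀ n : ℕ, p.totalDegree ≤ n → q.totalDegree ≤ n →
      (p + q).totalDegree ≤ n := fun p q n hp hq =>
    (totalDegree_add _ _).trans (max_le hp hq)
  rw [Matrix.det_fin_three]
  exact sub_le _ _ _ (add_le' _ _ _ (add_le' _ _ _ (sub_le _ _ _ (sub_le _ _ _ (H 0 1 2) (H 0 2 1))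
    (H 1 0 2)) (H 1 2 0)) (H 2 0 1)) (H 2 1 0)

private lemma isHomogeneous_det3 (M : Matrix (Fin 3) (Fin 3) P3) (n : ℕ)
    (h : ∀ i j, (M i j).IsHomogeneous n) : M.det.IsHomogeneous (n + n + n) := by
  have H : ∀ i j k : Fin 3, (M 0 i * M 1 j * M 2 k).IsHomogeneous (n + n + n) :=
    fun i j k => ((h 0 i).mul (h 1 j)).mul (h 2 k)
  rw [Matrix.det_fin_three]
  exact ((((((H 0 1 2).sub (H 0 2 1)).sub (H 1 0 2)).add (H 1 2 0)).add (H 2 0 1)).sub (H 2 1 0))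

private lemma totalDegree_eulerOp_le (p : P3) {n : ℕ} (h : p.totalDegree ≤ n + 1) :
    (eulerOp p).totalDegree ≤ n + 1 := by
  refine (totalDegree_finset_sum _ _).trans (Finset.sup_le fun i _ => ?_)
  refine (totalDegree_mul _ _).trans ?_
  have := totalDegree_pderiv_le i p h
  have hX : (X i : P3).totalDegree = 1 := totalDegree_X i
  omega

/-- If `φ` has degree `d ≥ 4` and satisfies the toric nearly Kähler equation, the Hessian
determinant of its top-degree homogeneous component vanishes identically. -/
theorem hessDet_top_component_eq_zero (φ : MvPolynomial (Fin 3) ℝ) (d : ℕ) (hd : 4 ≤ d)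
    (hdeg : φ.totalDegree = d) (hTNK : IsTNKSolution φ) :
    hessDet (homogeneousComponent d φ) = 0 := by
  obtain ⟨e, rfl⟩ : ∃ e, d = e + 4 := ⟨d - 4, by omega⟩
  set ψ := homogeneousComponent (e + 4) φ with hψdef
  have hψhom : ψ.IsHomogeneous (e + 4) := homogeneousComponent_isHomogeneous (e + 4) φ
  -- the second partials of ψ are homogeneous of degree e + 2
  have hA : ∀ i j : Fin 3, ((pderiv i (pderiv j ψ) : P3)).IsHomogeneous (e + 2) :=
    fun i j => isHomogeneous_pderiv (isHomogeneous_pderiv hψhom)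
  -- hessDet ψ is homogeneous of degree 3e + 6
  have hdet : (hessDet ψ).IsHomogeneous (3 * e + 6) := by
    have := isHomogeneous_det3 (Matrix.of fun i j : Fin 3 => pderiv i (pderiv j ψ)) (e + 2)
      (fun i j => hA i j)
    rwa [show (e + 2) + (e + 2) + (e + 2) = 3 * e + 6 by ring] at this
  -- φ - ψ has total degree ≤ e + 3
  have hρdeg : (φ - ψ).totalDegree ≤ e + 3 := by
    refine Finset.sup_le fun m hm => ?_
    rw [mem_support_iff, coeff_sub, hψdef, coeff_homogeneousComponent] at hm
    by_cases hdm : m.degree = e + 4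
    · simp [hdm] at hm
    · rw [if_neg hdm, sub_zero] at hm
      have hle : (m.sum fun _ n => n) ≤ e + 4 := hdeg ▸ le_totalDegree (mem_support_iff.mpr hm)
      have h3 : m.degree = m.sum fun _ n => n := rfl
      omega
  have hB : ∀ i j : Fin 3, ((pderiv i (pderiv j (φ - ψ)) : P3)).totalDegree ≤ e + 1 :=
    fun i j => totalDegree_pderiv_le i _ (totalDegree_pderiv_le j _ hρdeg)
  -- row decomposition
  set A : Fin 3 → Fin 3 → P3 := fun i j => pderiv i (pderiv j ψ) with hAdef
  set B : Fin 3 → Fin 3 → P3 := fun i j => pderiv i (pderiv j (φ - ψ)) with hBdef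
  have key : hessDet φ = ∑ s : Finset (Fin 3), Matrix.det (s.piecewise A B) := by
    have h1 : hessDet φ = Matrix.det (A + B) := by
      unfold hessDet
      congr 1
      funext i j
      show (pderiv i (pderiv j φ) : P3) = pderiv i (pderiv j ψ) + pderiv i (pderiv j (φ - ψ))
      rw [← map_add, ← map_add, add_sub_cancel]
    rw [h1]
    exact (Matrix.detRowAlternating :
      (Fin 3 → P3) [⋀^Fin 3]→ₗ[P3] P3).toMultilinearMap.map_add_univ A B
  have hψdet : hessDet ψ = Matrix.det (Finset.univ.piecewise A B) := by
    rw [Finset.piecewise_univ]; rfl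
  -- the difference has total degree ≤ 3e + 5
  have h2 : (hessDet φ - hessDet ψ).totalDegree ≤ 3 * e + 5 := by
    rw [key, hψdet, ← Finset.add_sum_erase _ _ (Finset.mem_univ (Finset.univ : Finset (Fin 3))),
      add_sub_cancel_left]
    refine (totalDegree_finset_sum _ _).trans (Finset.sup_le fun s hs => ?_)
    have hsne : s ≠ Finset.univ := (Finset.mem_erase.mp hs).1
    obtain ⟨i0, hi0⟩ : ∃ i, i ∉ s := by
      by_contra hc
      push_neg at hc
      exact hsne (Finset.eq_univ_iff_forall.mpr hc)
    obtain ⟨δ, hδ⟩ : ∃ δ : Fin 3 → ℕ, ∀ i, δ i = if i ∈ s then e + 2 else e + 1 :=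
      ⟨_, fun _ => rfl⟩
    have hentries : ∀ i j, ((s.piecewise A B) i j).totalDegree ≤ δ i := by
      intro i j
      rw [hδ i]
      by_cases hi : i ∈ s
      · rw [Finset.piecewise_eq_of_mem _ _ _ hi, if_pos hi]
        exact (hA i j).totalDegree_le
      · rw [Finset.piecewise_eq_of_notMem _ _ _ hi, if_neg hi]
        exact hB i j
    refine (totalDegree_det3_le _ δ hentries).trans ?_
    have hδle : ∀ i, δ i ≤ e + 2 := by
      intro i
      rw [hδ i]
      split <;> omega
    have hi0eq : δ i0 = e + 1 := by
      rw [hδ i0, if_neg hi0]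
    have h0 := hδle 0
    have h1' := hδle 1
    have h2' := hδle 2
    obtain ⟨v, hv⟩ := i0
    interval_cases v
    · have e0 : δ 0 = e + 1 := hi0eq
      omega
    · have e1 : δ 1 = e + 1 := hi0eq
      omega
    · have e2 : δ 2 = e + 1 := hi0eq
      omega
  -- total degree of hessDet φ is ≤ e + 4
  have h1 : (hessDet φ).totalDegree ≤ e + 4 := by
    have hTNK' : hessDet φ = C (8/3) * φ - C (11/3) * eulerOp φ + eulerOp (eulerOp φ) := hTNK
    have hφle : φ.totalDegree ≤ e + 3 + 1 := by omega
    have he1 : (eulerOp φ).totalDegree ≤ e + 3 + 1 := totalDegree_eulerOp_le φ hφle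
    have he2 : (eulerOp (eulerOp φ)).totalDegree ≤ e + 3 + 1 := totalDegree_eulerOp_le _ he1
    have hc1 : (C (8/3 : ℝ) * φ).totalDegree ≤ e + 4 := by
      refine (totalDegree_mul _ _).trans ?_
      have := totalDegree_C (8/3 : ℝ) (σ := Fin 3)
      omega
    have hc2 : (C (11/3 : ℝ) * eulerOp φ).totalDegree ≤ e + 4 := by
      refine (totalDegree_mul _ _).trans ?_
      have := totalDegree_C (11/3 : ℝ) (σ := Fin 3)
      omega
    rw [hTNK']
    refine (totalDegree_add _ _).trans (max_le ?_ (by omega))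
    exact (totalDegree_sub _ _).trans (max_le hc1 hc2)
  -- conclude
  by_contra hne
  have heq := hdet.totalDegree hne
  have : (hessDet ψ).totalDegree ≤ 3 * e + 5 := by
    have : hessDet ψ = hessDet φ - (hessDet φ - hessDet ψ) := by ring
    rw [this]
    exact (totalDegree_sub _ _).trans (max_le (by omega) h2)
  omega
end

section
/- There do not exist t₀ > 0 and a differentiable function x : [t₀, ∞) → ℝ such that x(t) > 2t·x'(t) and x'(t) > √(2t) for all t ≥ t₀. In other words, a solution of the radial constraints x > 2t·x' and x' > √(2t) cannot exist on an unbounded interval [t₀, ∞); the right endpoint t₊ of any maximal interval of validity of the constraints is finite. -/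
open Set

/-- The radial constraints `x > 2t·x'` and `x' > √(2t)` cannot hold on an unbounded
interval `[t₀, ∞)` with `t₀ > 0`: the right endpoint of any maximal interval of validity
is finite. -/
theorem no_global_radial_solution :
    ¬ ∃ (t₀ : ℝ) (x x' : ℝ → ℝ), 0 < t₀ ∧
        (∀ t : ℝ, t₀ ≤ t → HasDerivWithinAt x (x' t) (Set.Ici t₀) t) ∧
        (∀ t : ℝ, t₀ ≤ t → 2 * t * x' t < x t) ∧
        (∀ t : ℝ, t₀ ≤ t → Real.sqrt (2 * t) < x' t) := by
  rintro ⟨t₀, x, x', ht₀, hx, hup, hlo⟩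
  set c : ℝ := Real.sqrt (2 * t₀) with hc
  have hc0 : 0 < c := Real.sqrt_pos.2 (by linarith)
  have hxcont : ContinuousOn x (Ici t₀) := fun t ht => (hx t ht).continuousWithinAt
  -- x(t₀) > 0
  have hx0pos : 0 < x t₀ := by
    have h1 := hup t₀ le_rfl
    have h2 := hlo t₀ le_rfl
    nlinarith
  -- lower bound: x t ≥ x t₀ + c * (t - t₀)
  have hlow : ∀ t : ℝ, t₀ ≤ t → x t₀ + c * (t - t₀) ≤ x t := by
    have hmono : MonotoneOn (fun t => x t - c * t) (Ici t₀) := by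
      apply monotoneOn_of_hasDerivWithinAt_nonneg (f' := fun t => x' t - c) (convex_Ici t₀)
      · exact hxcont.sub ((continuous_const.mul continuous_id).continuousOn)
      · intro t ht
        rw [interior_Ici] at ht ⊢
        have h := ((hx t (le_of_lt ht)).mono (Ioi_subset_Ici_self)).sub
          (((hasDerivAt_id t).const_mul c).hasDerivWithinAt)
        rw [mul_one] at h
        exact h
      · intro t ht
        rw [interior_Ici] at ht
        have h1 := hlo t (le_of_lt ht)
        have h2 : c ≤ Real.sqrt (2 * t) := Real.sqrt_le_sqrt (by nlinarith [le_of_lt (mem_Ioi.1 ht)])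
        simp only [sub_nonneg]
        linarith
    intro t ht
    have := hmono (self_mem_Ici) (mem_Ici.2 ht) ht
    simp only at this
    linarith
  -- upper bound: x t / √t is antitone
  have hst0 : 0 < Real.sqrt t₀ := Real.sqrt_pos.2 ht₀
  have hanti : AntitoneOn (fun t => x t / Real.sqrt t) (Ici t₀) := by
    apply antitoneOn_of_hasDerivWithinAt_nonpos
      (f' := fun t => (x' t * Real.sqrt t - x t * (1 / (2 * Real.sqrt t))) / (Real.sqrt t) ^ 2)
      (convex_Ici t₀)
    · apply hxcont.div (Real.continuous_sqrt.continuousOn)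
      intro t ht
      exact (Real.sqrt_pos.2 (lt_of_lt_of_le ht₀ ht)).ne'
    · intro t ht
      rw [interior_Ici] at ht ⊢
      have htpos : 0 < t := lt_trans ht₀ ht
      exact ((hx t ht.le).mono Ioi_subset_Ici_self).div
        ((Real.hasDerivAt_sqrt htpos.ne').hasDerivWithinAt)
        (Real.sqrt_pos.2 htpos).ne'
    · intro t ht
      rw [interior_Ici] at ht
      have htpos : 0 < t := lt_trans ht₀ ht
      have hst : 0 < Real.sqrt t := Real.sqrt_pos.2 htpos
      have hsq : Real.sqrt t ^ 2 = t := Real.sq_sqrt htpos.le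
      have h1 := hup t ht.le
      apply le_of_lt
      apply div_neg_of_neg_of_pos _ (by positivity)
      rw [sub_neg, mul_one_div, lt_div_iff₀ (by positivity : (0:ℝ) < 2 * Real.sqrt t)]
      have e : x' t * Real.sqrt t * (2 * Real.sqrt t) = 2 * t * x' t := by
        rw [show x' t * Real.sqrt t * (2 * Real.sqrt t)
            = 2 * (Real.sqrt t * Real.sqrt t) * x' t from by ring,
          Real.mul_self_sqrt htpos.le]
      linarith
  set C : ℝ := x t₀ / Real.sqrt t₀ with hC
  have hCpos : 0 < C := div_pos hx0pos hst0
  have hupb : ∀ t : ℝ, t₀ ≤ t → x t ≤ C * Real.sqrt t := by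
    intro t ht
    have h := hanti self_mem_Ici (mem_Ici.2 ht) ht
    have hst : 0 < Real.sqrt t := Real.sqrt_pos.2 (lt_of_lt_of_le ht₀ ht)
    rw [div_le_div_iff₀ hst hst0] at h
    rw [hC, div_mul_eq_mul_div, le_div_iff₀ hst0]
    linarith
  -- choose large t and contradict
  set K : ℝ := (C + c * t₀ + c) / c with hK
  have hK1 : t₀ + 1 ≤ K := by
    rw [hK, le_div_iff₀ hc0]
    nlinarith
  have hKpos : 0 < K := by nlinarith
  set T : ℝ := max t₀ (K ^ 2) with hT
  have hTt0 : t₀ ≤ T := le_max_left _ _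
  have hsT : K ≤ Real.sqrt T := by
    calc K = Real.sqrt (K ^ 2) := (Real.sqrt_sq hKpos.le).symm
    _ ≤ Real.sqrt T := Real.sqrt_le_sqrt (le_max_right _ _)
  have hsq : Real.sqrt T ^ 2 = T := Real.sq_sqrt (le_trans ht₀.le hTt0)
  have h1 := hlow T hTt0
  have h2 := hupb T hTt0
  -- x t₀ + c (T - t₀) ≤ x T ≤ C √T, but c(T - t₀) ≥ C √T and x t₀ > 0
  have hs1 : (1:ℝ) ≤ Real.sqrt T := le_trans (by linarith) hsT
  have hkey : C * Real.sqrt T < x t₀ + c * (T - t₀) := by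
    have hKc : c * K = C + c * t₀ + c := by rw [hK]; field_simp
    have h3 : c * (K * Real.sqrt T) ≤ c * (Real.sqrt T * Real.sqrt T) :=
      mul_le_mul_of_nonneg_left (mul_le_mul_of_nonneg_right hsT (Real.sqrt_nonneg T)) hc0.le
    have h4 : c * t₀ * 1 ≤ c * t₀ * Real.sqrt T :=
      mul_le_mul_of_nonneg_left hs1 (by positivity)
    nlinarith [hsq, h3, h4, hKc, hc0, hCpos, hx0pos]
  linarith
end

section
/- Let I ⊆ (0,∞) be an open interval and let x : I → ℝ be twice differentiable, satisfying the radial toric nearly Kähler ODE 3(x'(t)² − 2t)(x'(t) + 2t·x''(t)) = 8(x(t) − 2t·x'(t)) and x'(t)² ≠ 2t for all t ∈ I. Then the function E(t) := x(t) − 2t·x'(t) satisfies E'(t) = −(8/3)·E(t)/(x'(t)² − 2t) for all t ∈ I. In particular, if in addition E(t) > 0 and x'(t)² > 2t on I, then E is strictly decreasing on I. -/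
open Set

/-- On an open interval `I = (a,b) ⊆ (0,∞)`, a twice differentiable solution of the radial
toric nearly Kähler ODE `3(x'² − 2t)(x' + 2t·x'') = 8(x − 2t·x')` with `x'² ≠ 2t` satisfies
`E' = −(8/3)·E/(x'² − 2t)` for `E = x − 2t·x'`; in particular `E` is strictly decreasing on
`I` whenever additionally `E > 0` and `x'² > 2t` on `I`. -/
theorem radial_ode_epsilon_decreasing (a b : ℝ) (hab : Set.Ioo a b ⊆ Set.Ioi (0 : ℝ))
    (x x' x'' : ℝ → ℝ)
    (hx' : ∀ t ∈ Set.Ioo a b, HasDerivAt x (x' t) t)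
    (hx'' : ∀ t ∈ Set.Ioo a b, HasDerivAt x' (x'' t) t)
    (hode : ∀ t ∈ Set.Ioo a b,
      3 * ((x' t) ^ 2 - 2 * t) * (x' t + 2 * t * x'' t) = 8 * (x t - 2 * t * x' t))
    (hne : ∀ t ∈ Set.Ioo a b, (x' t) ^ 2 ≠ 2 * t) :
    (∀ t ∈ Set.Ioo a b,
        HasDerivAt (fun s => x s - 2 * s * x' s)
          (-(8 / 3) * (x t - 2 * t * x' t) / ((x' t) ^ 2 - 2 * t)) t) ∧
      ((∀ t ∈ Set.Ioo a b, 0 < x t - 2 * t * x' t ∧ 2 * t < (x' t) ^ 2) →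
        StrictAntiOn (fun s => x s - 2 * s * x' s) (Set.Ioo a b)) := by
  have key : ∀ t ∈ Set.Ioo a b,
      HasDerivAt (fun s => x s - 2 * s * x' s)
        (-(8 / 3) * (x t - 2 * t * x' t) / ((x' t) ^ 2 - 2 * t)) t := by
    intro t ht
    have h2 : HasDerivAt (fun s => 2 * s * x' s) (2 * x' t + 2 * t * x'' t) t := by
      have ha : HasDerivAt (fun s : ℝ => 2 * s) 2 t := by
        simpa using (hasDerivAt_id t).const_mul (2 : ℝ)
      have := ha.mul (hx'' t ht)
      exact this
    have h3 := (hx' t ht).sub h2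
    have hd : x' t - (2 * x' t + 2 * t * x'' t)
        = -(8 / 3) * (x t - 2 * t * x' t) / ((x' t) ^ 2 - 2 * t) := by
      have hD : (x' t) ^ 2 - 2 * t ≠ 0 := sub_ne_zero.mpr (hne t ht)
      have h := hode t ht
      field_simp
      nlinarith [h]
    rw [hd] at h3
    exact h3
  refine ⟨key, fun hpos => ?_⟩
  apply strictAntiOn_of_deriv_neg (convex_Ioo a b)
  · intro t ht
    exact ((key t ht).differentiableAt).continuousAt.continuousWithinAt
  · intro t ht
    rw [interior_Ioo] at ht
    rw [(key t ht).deriv]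
    obtain ⟨hE, hD⟩ := hpos t ht
    have : (0:ℝ) < (x' t) ^ 2 - 2 * t := by linarith
    have hnum : -(8 / 3) * (x t - 2 * t * x' t) < 0 := by nlinarith
    exact div_neg_of_neg_of_pos hnum this
end
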